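/- Let N ≥ 3 and let ω(z) = Σ_{j=1}^{N-1} β(j) e(z)/(e(j/N) − e(z)) with Σ_{j=1}^{N-1} β(j) = 0 (so ω is holomorphic at 0), where e(z)=e^{2πiz}. Then the order of vanishing of ω at z = 0 equals the largest m ≥ 0 such that Σ_{j=1}^{N-1} β(j) cot^r(πj/N) = 0 for all 0 ≤ r ≤ m (with order ∞ if ω = 0). -/

import Mathlib

open Finset Complex

/-- The weak function `ω(z) = Σ_{j=1}^{N-1} β(j) e(z)/(e(j/N) − e(z))`, `e(z) = e^{2πiz}`. -/
noncomputable def weakFun (N : ℕ) (β : ℕ → ℂ) (z : ℂ) : ℂ :=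
  ∑ j ∈ Finset.Ico 1 N,
    β j * (Complex.exp (2 * Real.pi * Complex.I * z) /
      (Complex.exp (2 * Real.pi * Complex.I * j / N) - Complex.exp (2 * Real.pi * Complex.I * z)))

namespace OrderCot

open Polynomial

noncomputable def cc : ℂ := 2 * Real.pi * Complex.I

lemma cc_ne : cc ≠ 0 := by
  simp [cc, Real.pi_ne_zero, Complex.I_ne_zero, Complex.ext_iff, Real.pi_pos.ne']

noncomputable def Pk : ℕ → Polynomial ℂ
  | 0 => Polynomial.X
  | (k+1) => Polynomial.C cc * ((Polynomial.X ^ 2 + Polynomial.X) * (Pk k).derivative)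

lemma q2_natDegree : (Polynomial.X ^ 2 + Polynomial.X : Polynomial ℂ).natDegree = 2 := by
  compute_degree!

lemma q2_lead : (Polynomial.X ^ 2 + Polynomial.X : Polynomial ℂ).leadingCoeff = 1 := by
  rw [leadingCoeff, q2_natDegree]
  simp [Polynomial.coeff_X]

lemma Pk_deg_lead (k : ℕ) :
    (Pk k).natDegree = k + 1 ∧ (Pk k).leadingCoeff = cc ^ k * (Nat.factorial k : ℂ) := by
  induction k with
  | zero => simp [Pk]
  | succ k ih =>
    obtain ⟨hd, hl⟩ := ih
    have hlead_ne : (Pk k).leadingCoeff ≠ 0 := by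
      rw [hl]
      exact mul_ne_zero (pow_ne_zero _ cc_ne) (Nat.cast_ne_zero.2 (Nat.factorial_ne_zero k))
    have hp_ne : Pk k ≠ 0 := fun h => hlead_ne (by simp [h])
    have hcoeff : (Pk k).derivative.coeff k = (k + 1 : ℂ) * (Pk k).leadingCoeff := by
      rw [Polynomial.coeff_derivative, ← hd, Polynomial.coeff_natDegree]
      ring
    have hcoeff_ne : (Pk k).derivative.coeff k ≠ 0 := by
      rw [hcoeff]
      exact mul_ne_zero (by exact_mod_cast k.succ_ne_zero) hlead_ne
    have hdd : (Pk k).derivative.natDegree = k := by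
      refine le_antisymm ?_ (Polynomial.le_natDegree_of_ne_zero hcoeff_ne)
      simpa [hd] using Polynomial.natDegree_derivative_le (Pk k)
    have hdl : (Pk k).derivative.leadingCoeff = (k + 1 : ℂ) * (Pk k).leadingCoeff := by
      rw [leadingCoeff, hdd, hcoeff]
    have hder_ne : (Pk k).derivative ≠ 0 := fun h => hcoeff_ne (by simp [h])
    have hq2_ne : (Polynomial.X ^ 2 + Polynomial.X : Polynomial ℂ) ≠ 0 := fun h => by
      simpa [h] using q2_lead
    constructor
    · rw [Pk, Polynomial.natDegree_C_mul cc_ne, Polynomial.natDegree_mul hq2_ne hder_ne,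
        q2_natDegree, hdd]
      ring
    · rw [Pk, Polynomial.leadingCoeff_mul, Polynomial.leadingCoeff_mul, q2_lead,
        Polynomial.leadingCoeff_C, hdl, hl]
      push_cast [Nat.factorial_succ]
      ring

noncomputable def L : Polynomial ℂ :=
  Polynomial.C (-Complex.I / 2) * Polynomial.X + Polynomial.C (-1 / 2)

lemma hI2 : (-Complex.I / 2 : ℂ) ≠ 0 := by
  simp [div_ne_zero_iff, Complex.I_ne_zero]

lemma L_natDegree : L.natDegree = 1 := Polynomial.natDegree_linear hI2

lemma L_lead : L.leadingCoeff = -Complex.I / 2 := Polynomial.leadingCoeff_linear hI2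

noncomputable def Rk (k : ℕ) : Polynomial ℂ := (Pk k).comp L

lemma Rk_natDegree (k : ℕ) : (Rk k).natDegree = k + 1 := by
  rw [Rk, Polynomial.natDegree_comp, (Pk_deg_lead k).1, L_natDegree, mul_one]

lemma Rk_lead_ne (k : ℕ) : (Rk k).coeff (k + 1) ≠ 0 := by
  have h : (Rk k).coeff (k + 1) = (Rk k).leadingCoeff := by
    rw [← Rk_natDegree k]; rfl
  rw [h, Rk, Polynomial.leadingCoeff_comp (by rw [L_natDegree]; norm_num),
    (Pk_deg_lead k).2, L_lead, (Pk_deg_lead k).1]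
  refine mul_ne_zero (mul_ne_zero (pow_ne_zero _ cc_ne) (Nat.cast_ne_zero.2 (Nat.factorial_ne_zero k))) (pow_ne_zero _ hI2)



noncomputable def Efun (N j : ℕ) (z : ℂ) : ℂ :=
  Complex.exp (2 * Real.pi * Complex.I * j / N - 2 * Real.pi * Complex.I * z)

noncomputable def hfun (N j : ℕ) (z : ℂ) : ℂ := (Efun N j z - 1)⁻¹

def U (N : ℕ) : Set ℂ := {z | ∀ j ∈ Finset.Ico 1 N, Efun N j z ≠ 1}

lemma isOpen_U (N : ℕ) : IsOpen (U N) := by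
  have h : U N = ⋂ j ∈ Finset.Ico 1 N, (Efun N j) ⁻¹' {(1 : ℂ)}ᶜ := by
    ext z
    simp [U, Set.mem_iInter]
  rw [h]
  refine isOpen_biInter_finset fun j _ => ?_
  refine isOpen_compl_singleton.preimage ?_
  exact Complex.continuous_exp.comp (by fun_prop)

lemma zero_mem_U (N : ℕ) : 0 ∈ U N := by
  intro j hj hE
  rw [Finset.mem_Ico] at hj
  have hN0 : 0 < N := lt_of_le_of_lt (Nat.zero_le _) hj.2
  rw [Efun, Complex.exp_eq_one_iff] at hE
  obtain ⟨n, hn⟩ := hE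
  have h2 : (2 * Real.pi * Complex.I) * ((j : ℂ) / N) = (2 * Real.pi * Complex.I) * n := by
    linear_combination hn
  have h3 : ((j : ℂ) / N) = (n : ℂ) := by
    refine mul_left_cancel₀ ?_ h2
    simp [Real.pi_ne_zero, Complex.I_ne_zero, Complex.ext_iff, Real.pi_pos.ne']
  have h4 : ((j : ℝ) / N) = (n : ℝ) := by
    have := congrArg Complex.re h3
    simpa using this
  have h5 : (0 : ℝ) < (j : ℝ) / N := by
    apply div_pos <;> [exact_mod_cast hj.1; exact_mod_cast hN0]
  have h6 : (j : ℝ) / N < 1 := by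
    rw [div_lt_one (by exact_mod_cast hN0)]
    exact_mod_cast hj.2
  rw [h4] at h5 h6
  have h7 : (0 : ℤ) < n := by exact_mod_cast h5
  have h8 : n < 1 := by exact_mod_cast h6
  omega

lemma hasDerivAt_hfun (N j : ℕ) (z : ℂ) (hz : Efun N j z ≠ 1) :
    HasDerivAt (hfun N j) (cc * ((hfun N j z) ^ 2 + hfun N j z)) z := by
  have hden : Efun N j z - 1 ≠ 0 := sub_ne_zero.2 hz
  have harg : HasDerivAt (fun w : ℂ => 2 * Real.pi * Complex.I * j / N
      - 2 * Real.pi * Complex.I * w) (-(2 * Real.pi * Complex.I)) z := by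
    simpa using ((hasDerivAt_id z).const_mul (2 * Real.pi * Complex.I)).const_sub
      (2 * Real.pi * Complex.I * j / N)
  have hE : HasDerivAt (Efun N j) (Efun N j z * -(2 * Real.pi * Complex.I)) z := harg.cexp
  have h2 := (hE.sub_const 1).inv hden
  have h3 : -(Efun N j z * -(2 * Real.pi * Complex.I)) / (Efun N j z - 1) ^ 2
      = cc * ((hfun N j z) ^ 2 + hfun N j z) := by
    rw [hfun, cc]
    field_simp
    ring
  rw [h3] at h2
  exact h2

lemma weakFun_eq (N : ℕ) (β : ℕ → ℂ) (z : ℂ) (hz : z ∈ U N) :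
    weakFun N β z = ∑ j ∈ Finset.Ico 1 N, β j * hfun N j z := by
  refine Finset.sum_congr rfl fun j hj => ?_
  have hz' : Efun N j z ≠ 1 := hz j hj
  have hB : Complex.exp (2 * Real.pi * Complex.I * z) ≠ 0 := Complex.exp_ne_zero _
  have hEd : Efun N j z = Complex.exp (2 * Real.pi * Complex.I * j / N)
      / Complex.exp (2 * Real.pi * Complex.I * z) := by
    rw [Efun, Complex.exp_sub]
  have hne : Complex.exp (2 * Real.pi * Complex.I * j / N)
      - Complex.exp (2 * Real.pi * Complex.I * z) ≠ 0 := by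
    intro h
    apply hz'
    rw [hEd, sub_eq_zero.1 h, div_self hB]
  rw [hfun, hEd, div_sub_one hB, inv_div]

lemma iteratedDeriv_weakFun (N : ℕ) (β : ℕ → ℂ) :
    ∀ k, ∀ z ∈ U N, iteratedDeriv k (weakFun N β) z
      = ∑ j ∈ Finset.Ico 1 N, β j * (Pk k).eval (hfun N j z) := by
  intro k
  induction k with
  | zero =>
    intro z hz
    simpa [Pk] using weakFun_eq N β z hz
  | succ k ih =>
    intro z hz
    rw [iteratedDeriv_succ]
    have hnhds : U N ∈ nhds z := (isOpen_U N).mem_nhds hz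
    have hEq : iteratedDeriv k (weakFun N β)
        =ᶠ[nhds z] fun w => ∑ j ∈ Finset.Ico 1 N, β j * (Pk k).eval (hfun N j w) :=
      Filter.eventuallyEq_of_mem hnhds fun w hw => ih w hw
    rw [hEq.deriv_eq]
    have hder : HasDerivAt (fun w => ∑ j ∈ Finset.Ico 1 N, β j * (Pk k).eval (hfun N j w))
        (∑ j ∈ Finset.Ico 1 N, β j * (Pk (k + 1)).eval (hfun N j z)) z := by
      refine HasDerivAt.fun_sum fun j hj => ?_
      have h1 := hasDerivAt_hfun N j z (hz j hj)
      have h2 := ((Pk k).hasDerivAt (hfun N j z)).comp z h1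
      have h3 := h2.const_mul (β j)
      have h4 : β j * (Pk (k + 1)).eval (hfun N j z)
          = β j * ((Pk k).derivative.eval (hfun N j z)
              * (cc * ((hfun N j z) ^ 2 + hfun N j z))) := by
        show β j * (Polynomial.C cc * ((Polynomial.X ^ 2 + Polynomial.X)
            * (Pk k).derivative)).eval (hfun N j z) = _
        simp only [Polynomial.eval_mul, Polynomial.eval_C, Polynomial.eval_add,
          Polynomial.eval_pow, Polynomial.eval_X]
        ring
      rw [h4]
      simpa [Function.comp] using h3
    exact hder.deriv

lemma trig_key (x : ℝ) (hs : Real.sin x ≠ 0) :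
    (Complex.exp (2 * (x : ℂ) * Complex.I) - 1)⁻¹
      = -Complex.I / 2 * (Real.cot x : ℂ) - 1 / 2 := by
  have hsc : Complex.sin x ^ 2 + Complex.cos x ^ 2 = 1 := Complex.sin_sq_add_cos_sq _
  have hE : Complex.exp (2 * (x : ℂ) * Complex.I) - 1
      = 2 * Complex.sin x * (-Complex.sin x + Complex.cos x * Complex.I) := by
    rw [show 2 * (x : ℂ) * Complex.I = ((2 * x : ℝ) : ℂ) * Complex.I by push_cast; ring,
      Complex.exp_mul_I]
    push_cast
    rw [Complex.cos_two_mul, Complex.sin_two_mul]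
    linear_combination 2 * hsc
  have hcot : (Real.cot x : ℂ) = Complex.cos x / Complex.sin x := by
    rw [Real.cot_eq_cos_div_sin]
    push_cast
    ring
  have hs' : Complex.sin x ≠ 0 := by
    rw [← Complex.ofReal_sin]
    exact_mod_cast hs
  have h2 : -Complex.sin x + Complex.cos x * Complex.I ≠ 0 := by
    intro h
    apply hs
    rw [← Complex.ofReal_sin, ← Complex.ofReal_cos] at h
    have := congrArg Complex.re h
    simpa [Complex.sin_ofReal_re] using this
  rw [hE, hcot]
  field_simp
  linear_combination (-1) * hsc
    + (Complex.cos x ^ 2) * Complex.I_sq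

lemma hfun_zero (N j : ℕ) (hj : j ∈ Finset.Ico 1 N) :
    hfun N j 0 = L.eval ((Real.cot (Real.pi * j / N) : ℂ)) := by
  rw [Finset.mem_Ico] at hj
  have hN0 : 0 < N := lt_of_le_of_lt (Nat.zero_le _) hj.2
  have hx1 : (0 : ℝ) < Real.pi * j / N := by
    apply div_pos (mul_pos Real.pi_pos (by exact_mod_cast hj.1)) (by exact_mod_cast hN0)
  have hx2 : Real.pi * j / N < Real.pi := by
    rw [div_lt_iff₀ (by exact_mod_cast hN0)]
    have : (j : ℝ) < N := by exact_mod_cast hj.2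
    nlinarith [Real.pi_pos]
  have hs : Real.sin (Real.pi * j / N) ≠ 0 :=
    (Real.sin_pos_of_pos_of_lt_pi hx1 hx2).ne'
  have harg : (2 : ℂ) * Real.pi * Complex.I * j / N - 2 * Real.pi * Complex.I * 0
      = 2 * ((Real.pi * j / N : ℝ) : ℂ) * Complex.I := by
    push_cast
    ring
  rw [hfun, Efun, harg, trig_key _ hs, L]
  simp
  ring

lemma D_eq (N : ℕ) (β : ℕ → ℂ) (k : ℕ) :
    iteratedDeriv k (weakFun N β) 0
      = ∑ r ∈ Finset.range (k + 2),
          (Rk k).coeff r * ∑ j ∈ Finset.Ico 1 N, β j * (Real.cot (Real.pi * j / N) : ℂ) ^ r := by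
  rw [iteratedDeriv_weakFun N β k 0 (zero_mem_U N)]
  have step1 : ∀ j ∈ Finset.Ico 1 N, β j * (Pk k).eval (hfun N j 0)
      = β j * ∑ r ∈ Finset.range (k + 2),
          (Rk k).coeff r * (Real.cot (Real.pi * j / N) : ℂ) ^ r := by
    intro j hj
    rw [hfun_zero N j hj, ← Polynomial.eval_comp, ← Rk,
      Polynomial.eval_eq_sum_range' (n := k + 2) (by rw [Rk_natDegree]; omega) _]
  rw [Finset.sum_congr rfl step1]
  simp only [Finset.mul_sum]
  rw [Finset.sum_comm]
  exact Finset.sum_congr rfl fun r _ => Finset.sum_congr rfl fun j _ => by ring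

end OrderCot

/-- The order of vanishing of `ω` at `0` equals the largest `m` such that all the cotangent
sums `Σ_j β(j) cot^r(πj/N)` vanish for `0 ≤ r ≤ m`; stated equivalently:
for every `m`, the first `m` Taylor coefficients of `ω` at `0` vanish iff
the cotangent sums vanish for all `r ≤ m`. -/
theorem order_eq_cotangent_kernel (N : ℕ) (hN : 3 ≤ N) (β : ℕ → ℂ)
    (hsum : ∑ j ∈ Finset.Ico 1 N, β j = 0) :
    ∀ m : ℕ,
      (∀ k, k < m → iteratedDeriv k (weakFun N β) 0 = 0) ↔
      (∀ r, r ≤ m →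
        ∑ j ∈ Finset.Ico 1 N, β j * (Real.cot (Real.pi * j / N) : ℂ) ^ r = 0) := by
  have hS0 : ∑ j ∈ Finset.Ico 1 N, β j * (Real.cot (Real.pi * j / N) : ℂ) ^ 0 = 0 := by
    simpa using hsum
  intro m
  induction m with
  | zero =>
    constructor
    · intro _ r hr
      have : r = 0 := Nat.le_zero.mp hr
      subst this
      exact hS0
    · intro _ k hk
      omega
  | succ m ih =>
    constructor
    · intro hf
      have h1 := ih.1 fun k hk => hf k (Nat.lt_succ_of_lt hk)
      intro r hr
      rcases Nat.lt_succ_iff_lt_or_eq.mp (Nat.lt_succ_of_le hr) with h | h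
      · exact h1 r (by omega)
      · have hDm : iteratedDeriv m (weakFun N β) 0 = 0 := hf m (Nat.lt_succ_self m)
        rw [OrderCot.D_eq N β m, Finset.sum_range_succ] at hDm
        have hzero : ∑ i ∈ Finset.range (m + 1), (OrderCot.Rk m).coeff i
            * ∑ j ∈ Finset.Ico 1 N, β j * (Real.cot (Real.pi * j / N) : ℂ) ^ i = 0 := by
          refine Finset.sum_eq_zero fun i hi => ?_
          rw [h1 i (by rw [Finset.mem_range] at hi; omega)]
          exact mul_zero _
        rw [hzero, zero_add] at hDm
        have h2 := (mul_eq_zero.mp hDm).resolve_left (OrderCot.Rk_lead_ne m)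
        rw [h]
        exact h2
    · intro hb k hk
      rcases Nat.lt_succ_iff_lt_or_eq.mp hk with h | h
      · exact ih.2 (fun r hr => hb r (le_trans hr (Nat.le_succ m))) k h
      · subst h
        rw [OrderCot.D_eq N β k]
        refine Finset.sum_eq_zero fun i hi => ?_
        rw [hb i (by rw [Finset.mem_range] at hi; omega)]
        exact mul_zero _
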